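/- Let G be a finitely generated group with subgroups N and H such that H normalizes N, G = NH, and N ∩ H is normally finitely generated as a subgroup of H (i.e., it is the normal closure in H of a finite set). Let φ : H → Aut(N) be the conjugation action. Then there exists a finite subset S ⊆ N such that the set φ(H)(S) = {φ(h)(s) : h ∈ H, s ∈ S} generates N. -/

import Mathlib

/-- Let `G` be finitely generated with subgroups `N, H` such that `H` normalizes `N`,
`G = NH`, and `N ∩ H` is the normal closure in `H` of a finite set. Then there is a finite
subset `S ⊆ N` such that the set of `H`-conjugates of `S` generates `N`. -/
theorem exists_finite_conjugation_generating_set {G : Type*} [Group G] [Group.FG G]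
    (N H : Subgroup G) (hnorm : H ≤ Subgroup.normalizer (N : Set G))
    (hprod : ∀ g : G, ∃ n ∈ N, ∃ h ∈ H, g = n * h)
    (hfn : ∃ T : Finset ↥H, Subgroup.normalClosure (T : Set ↥H) = N.subgroupOf H) :
    ∃ S : Finset G, (S : Set G) ⊆ N ∧
      Subgroup.closure {x : G | ∃ h ∈ H, ∃ s ∈ S, x = h * s * h⁻¹} = N := by
  classical
  obtain ⟨T, hT⟩ := hfn
  obtain ⟨F, hF⟩ := Group.FG.out (G := G)
  choose n hnN h hH heq using hprod
  set S : Finset G := F.image n ∪ T.image (fun t : ↥H => (t : G)) with hS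
  have hTN : ∀ t ∈ T, (t : G) ∈ N := fun t ht => by
    have : t ∈ N.subgroupOf H := hT ▸ Subgroup.subset_normalClosure ht
    exact this
  have hSN : (S : Set G) ⊆ N := by
    intro x hx
    rcases Finset.mem_union.mp (Finset.mem_coe.mp hx) with h1 | h2
    · obtain ⟨f, _, rfl⟩ := Finset.mem_image.mp h1
      exact hnN f
    · obtain ⟨t, ht, rfl⟩ := Finset.mem_image.mp h2
      exact hTN t ht
  set C : Set G := {x : G | ∃ h ∈ H, ∃ s ∈ S, x = h * s * h⁻¹} with hC
  set K := Subgroup.closure C with hK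
  have hSC : (S : Set G) ⊆ C := fun s hs => ⟨1, one_mem _, s, hs, by simp⟩
  have hSK : (S : Set G) ⊆ K := fun s hs => Subgroup.subset_closure (hSC hs)
  have hKN : K ≤ N := by
    rw [hK, Subgroup.closure_le]
    rintro x ⟨g, hg, s, hs, rfl⟩
    exact ((Subgroup.mem_normalizer_iff.mp (hnorm hg)) s).mp (hSN hs)
  have key : ∀ g ∈ H, ∀ k ∈ K, g * k * g⁻¹ ∈ K := by
    intro g hg k hk
    induction hk using Subgroup.closure_induction with
    | mem x hx =>
      obtain ⟨g', hg', s, hs, rfl⟩ := hx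
      refine Subgroup.subset_closure ⟨g * g', mul_mem hg hg', s, hs, by group⟩
    | one => simpa using one_mem K
    | mul x y hx hy ihx ihy =>
      have : g * (x * y) * g⁻¹ = (g * x * g⁻¹) * (g * y * g⁻¹) := by group
      rw [this]; exact mul_mem ihx ihy
    | inv x hx ih =>
      have : g * x⁻¹ * g⁻¹ = (g * x * g⁻¹)⁻¹ := by group
      rw [this]; exact inv_mem ih
  have hD : ∀ g : G, ∃ k ∈ K, ∃ x ∈ H, g = k * x := by
    intro g
    have hg : g ∈ Subgroup.closure (F : Set G) := by rw [hF]; trivial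
    induction hg using Subgroup.closure_induction with
    | mem f hf =>
      exact ⟨n f, hSK (Finset.mem_coe.mpr (Finset.mem_union_left _
        (Finset.mem_image_of_mem n hf))), h f, hH f, heq f⟩
    | one => exact ⟨1, one_mem K, 1, one_mem H, by simp⟩
    | mul x y hx hy ihx ihy =>
      obtain ⟨k1, hk1, a, ha, rfl⟩ := ihx
      obtain ⟨k2, hk2, b, hb, rfl⟩ := ihy
      refine ⟨k1 * (a * k2 * a⁻¹), mul_mem hk1 (key a ha k2 hk2), a * b,
        mul_mem ha hb, by group⟩
    | inv x hx ih =>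
      obtain ⟨k, hk, a, ha, rfl⟩ := ih
      refine ⟨_, key a⁻¹ (inv_mem ha) k⁻¹ (inv_mem hk), a⁻¹, inv_mem ha, by group⟩
  refine ⟨S, hSN, le_antisymm hKN ?_⟩
  intro m hm
  obtain ⟨k, hk, x, hx, rfl⟩ := hD m
  have hxN : x ∈ N := by
    have : x = k⁻¹ * (k * x) := by group
    rw [this]
    exact mul_mem (inv_mem (hKN hk)) hm
  haveI hnormal : (K.comap H.subtype).Normal := by
    refine ⟨fun a ha g => ?_⟩
    have : ((g * a * g⁻¹ : ↥H) : G) ∈ K := by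
      push_cast
      exact key g g.2 a ha
    exact this
  have hle : Subgroup.normalClosure (T : Set ↥H) ≤ K.comap H.subtype := by
    refine Subgroup.normalClosure_le_normal ?_
    intro t ht
    have : (t : G) ∈ K := hSK (Finset.mem_coe.mpr (Finset.mem_union_right _
      (Finset.mem_image_of_mem _ (Finset.mem_coe.mp ht))))
    exact this
  have hxK : x ∈ K := by
    have hmem : (⟨x, hx⟩ : ↥H) ∈ N.subgroupOf H := hxN
    rw [← hT] at hmem
    exact hle hmem
  exact mul_mem hk hxK
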